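/- Assume in addition that H·ξ ≠ 0 and ξ×H ≠ 0. Then 0 < c_s²(ξ) < (H·ξ)²/ρ < c_f²(ξ); in particular c_s²(ξ) ≠ c_f²(ξ) and the values c_s²(ξ), (H·ξ)²/ρ, c_f²(ξ) are pairwise distinct and positive. -/
import Mathlib


open Matrix

noncomputable section

/-- Euclidean dot product on `ℝ³`. -/
def dot3 (a b : Fin 3 → ℝ) : ℝ := a 0 * b 0 + a 1 * b 1 + a 2 * b 2

/-- Cross product on `ℝ³`. -/
def cross3 (a b : Fin 3 → ℝ) : Fin 3 → ℝ :=
  ![a 1 * b 2 - a 2 * b 1, a 2 * b 0 - a 0 * b 2, a 0 * b 1 - a 1 * b 0]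

/-- The sound speed squared `c² = γp/ρ`. -/
def csq (ρ γ p : ℝ) : ℝ := γ * p / ρ

/-- The Alfvén speed squared `h² = |H|²/ρ`. -/
def hsq (ρ : ℝ) (H : Fin 3 → ℝ) : ℝ := dot3 H H / ρ

/-- `b²(ξ) = |ξ×H|²/ρ`. -/
def bsq (ρ : ℝ) (H ξ : Fin 3 → ℝ) : ℝ := dot3 (cross3 ξ H) (cross3 ξ H) / ρ

/-- The slow magnetosonic speed squared `c_s²(ξ)`. -/
def cs2 (ρ γ p : ℝ) (H ξ : Fin 3 → ℝ) : ℝ :=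
  ((csq ρ γ p + hsq ρ H) * dot3 ξ ξ
    - Real.sqrt ((csq ρ γ p - hsq ρ H) ^ 2 * (dot3 ξ ξ) ^ 2
        + 4 * bsq ρ H ξ * csq ρ γ p * dot3 ξ ξ)) / 2

/-- The fast magnetosonic speed squared `c_f²(ξ)`. -/
def cf2 (ρ γ p : ℝ) (H ξ : Fin 3 → ℝ) : ℝ :=
  ((csq ρ γ p + hsq ρ H) * dot3 ξ ξ
    + Real.sqrt ((csq ρ γ p - hsq ρ H) ^ 2 * (dot3 ξ ξ) ^ 2
        + 4 * bsq ρ H ξ * csq ρ γ p * dot3 ξ ξ)) / 2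



lemma dot3_self_nonneg (v : Fin 3 → ℝ) : 0 ≤ dot3 v v := by
  unfold dot3
  nlinarith [mul_self_nonneg (v 0), mul_self_nonneg (v 1), mul_self_nonneg (v 2)]

lemma dot3_self_pos {v : Fin 3 → ℝ} (hv : v ≠ 0) : 0 < dot3 v v := by
  rcases (dot3_self_nonneg v).lt_or_eq with h | h
  · exact h
  · exfalso
    apply hv
    have h0 : v 0 = 0 := by
      have : v 0 ^ 2 = 0 := le_antisymm (by unfold dot3 at h; nlinarith [sq_nonneg (v 1), sq_nonneg (v 2)]) (sq_nonneg _)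
      exact pow_eq_zero_iff (by norm_num) |>.mp this
    have h1 : v 1 = 0 := by
      have : v 1 ^ 2 = 0 := le_antisymm (by unfold dot3 at h; nlinarith [sq_nonneg (v 0), sq_nonneg (v 2)]) (sq_nonneg _)
      exact pow_eq_zero_iff (by norm_num) |>.mp this
    have h2 : v 2 = 0 := by
      have : v 2 ^ 2 = 0 := le_antisymm (by unfold dot3 at h; nlinarith [sq_nonneg (v 0), sq_nonneg (v 1)]) (sq_nonneg _)
      exact pow_eq_zero_iff (by norm_num) |>.mp this
    funext i
    fin_cases i <;> simp [h0, h1, h2]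

lemma magnetosonic_aux (c2 h2 b2 a S : ℝ) (hc2 : 0 < c2) (hh2 : 0 ≤ h2)
    (ha : 0 < a) (hb2 : 0 < b2) (hS : 0 < S)
    (key : h2 * S = a + b2) :
    0 < ((c2 + h2) * S - Real.sqrt ((c2 - h2) ^ 2 * S ^ 2 + 4 * b2 * c2 * S)) / 2 ∧
    ((c2 + h2) * S - Real.sqrt ((c2 - h2) ^ 2 * S ^ 2 + 4 * b2 * c2 * S)) / 2 < a ∧
    a < ((c2 + h2) * S + Real.sqrt ((c2 - h2) ^ 2 * S ^ 2 + 4 * b2 * c2 * S)) / 2 ∧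
    ((c2 + h2) * S - Real.sqrt ((c2 - h2) ^ 2 * S ^ 2 + 4 * b2 * c2 * S)) / 2 ≠
      ((c2 + h2) * S + Real.sqrt ((c2 - h2) ^ 2 * S ^ 2 + 4 * b2 * c2 * S)) / 2 := by
  set D := (c2 - h2) ^ 2 * S ^ 2 + 4 * b2 * c2 * S with hD_def
  have hD : 0 < D := by
    nlinarith [sq_nonneg ((c2 - h2) * S), mul_pos (mul_pos hb2 hc2) hS]
  set s := Real.sqrt D with hs_def
  have hs2 : s ^ 2 = D := Real.sq_sqrt hD.le
  have hspos : 0 < s := Real.sqrt_pos.mpr hD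
  have hXD : D - ((c2 + h2) * S - 2 * a) ^ 2 = 4 * a * b2 := by
    linear_combination (4 * a - 4 * c2 * S) * key
  have hX2 : ((c2 + h2) * S - 2 * a) ^ 2 < s ^ 2 := by
    nlinarith [mul_pos ha hb2]
  have hXlt : (c2 + h2) * S - 2 * a < s := lt_of_pow_lt_pow_left₀ 2 hspos.le hX2
  have hXgt : -s < (c2 + h2) * S - 2 * a := by
    have h' : (-((c2 + h2) * S - 2 * a)) ^ 2 < s ^ 2 := by rw [neg_sq]; exact hX2
    have := lt_of_pow_lt_pow_left₀ 2 hspos.le h'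
    linarith
  have hsmall : s < (c2 + h2) * S := by
    have hD2 : ((c2 + h2) * S) ^ 2 - D = 4 * c2 * S * a := by
      linear_combination (4 * c2 * S) * key
    have h1 : s ^ 2 < ((c2 + h2) * S) ^ 2 := by
      nlinarith [mul_pos (mul_pos hc2 hS) ha]
    exact lt_of_pow_lt_pow_left₀ 2 (by positivity) h1
  exact ⟨by linarith, by linarith, by linarith, by intro h; linarith⟩

/-- If `H·ξ ≠ 0` and `ξ×H ≠ 0`, then `0 < c_s²(ξ) < (H·ξ)²/ρ < c_f²(ξ)`; in
particular `c_s²(ξ) ≠ c_f²(ξ)` and the three values are pairwise distinct and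
positive. -/
theorem stmt0 (ρ γ p : ℝ) (H ξ : Fin 3 → ℝ)
    (hρ : 0 < ρ) (hγp : 0 < γ * p)
    (hHξ : dot3 H ξ ≠ 0) (hcross : cross3 ξ H ≠ 0) :
    0 < cs2 ρ γ p H ξ ∧ cs2 ρ γ p H ξ < (dot3 H ξ) ^ 2 / ρ ∧
      (dot3 H ξ) ^ 2 / ρ < cf2 ρ γ p H ξ ∧ cs2 ρ γ p H ξ ≠ cf2 ρ γ p H ξ := by
  have hC : 0 < csq ρ γ p := div_pos hγp hρ
  have hB : 0 < dot3 (cross3 ξ H) (cross3 ξ H) := dot3_self_pos hcross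
  have hA : 0 < dot3 H ξ ^ 2 := lt_of_le_of_ne (sq_nonneg _) (Ne.symm (pow_ne_zero 2 hHξ))
  have lagrange : dot3 ξ ξ * dot3 H H
      = dot3 H ξ ^ 2 + dot3 (cross3 ξ H) (cross3 ξ H) := by
    simp [dot3, cross3]; ring
  have hS : 0 < dot3 ξ ξ := by
    rcases (dot3_self_nonneg ξ).lt_or_eq with h | h
    · exact h
    · exfalso; nlinarith [dot3_self_nonneg H]
  have hh2 : 0 ≤ hsq ρ H := div_nonneg (dot3_self_nonneg H) hρ.le
  have key : hsq ρ H * dot3 ξ ξ = dot3 H ξ ^ 2 / ρ + bsq ρ H ξ := by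
    unfold hsq bsq
    field_simp
    linear_combination lagrange
  simpa only [cs2, cf2] using
    magnetosonic_aux (csq ρ γ p) (hsq ρ H) (bsq ρ H ξ) (dot3 H ξ ^ 2 / ρ) (dot3 ξ ξ)
      hC hh2 (div_pos hA hρ) (div_pos hB hρ) hS key
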